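/- The intersection of M_B with the plane H orthogonal to (τ,0,1)ᵗ equals the ℤ[τ]-module generated by (0,2,0)ᵗ and (−1, −τ', τ)ᵗ. -/

import Mathlib

noncomputable def τ : ℝ := (1 + Real.sqrt 5) / 2

noncomputable def τ' : ℝ := 1 - τ

/-- The ring `ℤ[τ]`, as a subset of `ℝ`. -/
def Ztau : Set ℝ := {x | ∃ a b : ℤ, x = (a : ℝ) + (b : ℝ) * τ}

/-- The standard body-centred icosahedral module `M_B`. -/
def MB : Set (Fin 3 → ℝ) :=
  {v | (∀ i, v i ∈ Ztau) ∧ ∃ w ∈ Ztau, τ ^ 2 * v 0 + τ * v 1 + v 2 = 2 * w}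

lemma tau_sq : τ ^ 2 = τ + 1 := Real.goldenRatio_sq

lemma tau_irr : Irrational τ := Real.goldenRatio_irrational

lemma zero_eq {a b : ℤ} (h : (a : ℝ) + (b : ℝ) * τ = 0) : a = 0 ∧ b = 0 := by
  by_cases hb : b = 0
  · subst hb
    have : (a : ℝ) = 0 := by push_cast at h; linarith
    exact ⟨by exact_mod_cast this, rfl⟩
  · exfalso
    have hbR : (b : ℝ) ≠ 0 := Int.cast_ne_zero.mpr hb
    have hτ : τ = ((-a : ℚ) / (b : ℚ) : ℚ) := by
      push_cast
      field_simp
      linarith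
    exact (Rat.not_irrational _) (hτ ▸ tau_irr)

lemma key (A B : ℝ) :
    A • (![0, 2, 0] : Fin 3 → ℝ) + B • ![-1, -τ', τ] = ![-B, 2 * A - τ' * B, τ * B] := by
  funext i
  fin_cases i <;>
    simp [Matrix.cons_val_zero, Matrix.cons_val_one, Matrix.head_cons] <;> ring

/-- The intersection of `M_B` with the plane orthogonal to `(τ,0,1)` equals the
`ℤ[τ]`-module generated by `(0,2,0)` and `(−1,−τ',τ)`. -/
theorem MB_inter_plane :
    {v | v ∈ MB ∧ τ * v 0 + 0 * v 1 + 1 * v 2 = 0} =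
    {v | ∃ a ∈ Ztau, ∃ b ∈ Ztau,
      v = a • (![0, 2, 0] : Fin 3 → ℝ) + b • ![-1, -τ', τ]} := by
  have tsq : τ ^ 2 = τ + 1 := tau_sq
  ext v
  simp only [Set.mem_setOf_eq]
  constructor
  · rintro ⟨⟨hc, w, ⟨u, m, hw⟩, heq⟩, hplane⟩
    obtain ⟨p, q, h0⟩ := hc 0
    obtain ⟨r, s, h1⟩ := hc 1
    obtain ⟨x, y, h2⟩ := hc 2
    rw [h0, h1, h2] at heq hplane
    rw [hw] at heq
    have e1 : ((q + x : ℤ) : ℝ) + ((p + q + y : ℤ) : ℝ) * τ = 0 := by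
      push_cast
      linear_combination hplane - (q : ℝ) * tsq
    have e2 : ((p + q + s + x - 2*u : ℤ) : ℝ) + ((p + 2*q + r + s + y - 2*m : ℤ) : ℝ) * τ = 0 := by
      push_cast
      linear_combination heq - ((p : ℝ) + s + q * τ + q) * tsq
    obtain ⟨k1, k2⟩ := zero_eq e1
    obtain ⟨k3, k4⟩ := zero_eq e2
    set A : ℝ := ((m - u : ℤ) : ℝ) + ((u : ℤ) : ℝ) * τ with hA
    set B : ℝ := ((-p : ℤ) : ℝ) + ((-q : ℤ) : ℝ) * τ with hB
    refine ⟨A, ⟨m - u, u, rfl⟩, B, ⟨-p, -q, rfl⟩, ?_⟩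
    rw [key A B]
    have hs : (s : ℝ) = 2*u - p := by exact_mod_cast (by omega : s = 2*u - p)
    have hr : (r : ℝ) = 2*m - 2*u + p - q := by
      exact_mod_cast (by omega : r = 2*m - 2*u + p - q)
    have hx : (x : ℝ) = -q := by exact_mod_cast (by omega : x = -q)
    have hy : (y : ℝ) = -(p + q) := by exact_mod_cast (by omega : y = -(p+q))
    have c0 : v 0 = -B := by rw [h0, hB]; push_cast; ring
    have c1 : v 1 = 2 * A - τ' * B := by
      rw [h1, hA, hB]
      unfold τ'
      push_cast
      rw [hr, hs]
      linear_combination (q : ℝ) * tsq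
    have c2 : v 2 = τ * B := by
      rw [h2, hB]
      push_cast
      rw [hx, hy]
      linear_combination (q : ℝ) * tsq
    funext i
    fin_cases i
    exacts [c0, c1, c2]
  · rintro ⟨a, ⟨a1, a2, ha⟩, b, ⟨b1, b2, hb⟩, rfl⟩
    rw [key a b]
    have m0 : -b ∈ Ztau := ⟨-b1, -b2, by rw [hb]; push_cast; ring⟩
    have m1 : 2 * a - τ' * b ∈ Ztau := by
      refine ⟨2*a1 - b1 + b2, 2*a2 + b1, ?_⟩
      rw [ha, hb]
      unfold τ'
      push_cast
      linear_combination (b2 : ℝ) * tsq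
    have m2 : τ * b ∈ Ztau := by
      refine ⟨b2, b1 + b2, ?_⟩
      rw [hb]
      push_cast
      linear_combination (b2 : ℝ) * tsq
    refine ⟨⟨?_, τ * a, ⟨a2, a1 + a2, by rw [ha]; push_cast; linear_combination (a2 : ℝ) * tsq⟩, ?_⟩, ?_⟩
    · intro i
      fin_cases i
      exacts [m0, m1, m2]
    · show τ ^ 2 * (-b) + τ * (2 * a - τ' * b) + τ * b = 2 * (τ * a)
      unfold τ'
      linear_combination (-(b : ℝ)) * tsq + (b : ℝ) * tsq
    · show τ * (-b) + 0 * (2 * a - τ' * b) + 1 * (τ * b) = 0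
      ring
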